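/- arXiv:1803.06408 — 3 statements merged into one kernel-verified Lean document; each statement's English description precedes it below -/
import Mathlib

section
/- The compositional inverse (reversion) of x·(1 + rx)/(1 + (r+1)x) is x·N(x) where N(x) = (1/(1-(r+1)x))·c(-rx/(1-(r+1)x)^2) and c is the Catalan generating function; i.e., if u(x) is the unique formal power series with u(0) = 0 solving u(1+ru)/(1+(r+1)u) = x, then u(x) = (x/(1-(r+1)x))·c(-rx/(1-(r+1)x)^2). -/
open PowerSeries Finset

noncomputable section

/-- The field ℚ(r) of rational functions, in which the parameter r lives. -/
abbrev K : Type := RatFunc ℚ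

instance : CharZero K := RingHom.charZero_iff (algebraMap ℚ K).injective |>.mp inferInstance

/-- The parameter r. -/
def r : K := RatFunc.X

/-- Composition f(g) of formal power series (intended for g with zero constant term). -/
def pcomp (f g : K⟦X⟧) : K⟦X⟧ :=
  PowerSeries.mk fun n => ∑ k ∈ Finset.range (n + 1), coeff k f * coeff n (g ^ k)

/-- The generating function of the Catalan numbers. -/
def catalanGF : K⟦X⟧ := PowerSeries.mk fun n => (catalan n : K)

lemma coeff_pow_eq_zero {g : K⟦X⟧} (hg : constantCoeff g = 0) {n k : ℕ} (h : n < k) :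
    coeff n (g ^ k) = 0 := by
  have hd : (X : K⟦X⟧) ^ k ∣ g ^ k := pow_dvd_pow_of_dvd (X_dvd_iff.mpr hg) k
  exact X_pow_dvd_iff.mp hd n h

lemma coeff_pcomp {f g : K⟦X⟧} (hg : constantCoeff g = 0) {n m : ℕ} (h : n < m) :
    coeff n (pcomp f g) = ∑ k ∈ range m, coeff k f * coeff n (g ^ k) := by
  rw [pcomp, coeff_mk]
  apply Finset.sum_subset (Finset.range_subset_range.mpr h)
  intro k _ hk2
  rw [mem_range, not_lt] at hk2
  rw [coeff_pow_eq_zero hg (by omega), mul_zero]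

lemma pcomp_coe {g : K⟦X⟧} (hg : constantCoeff g = 0) (p : Polynomial K) :
    pcomp (p : K⟦X⟧) g = Polynomial.eval₂ C g p := by
  ext n
  have h2 : PowerSeries.trunc (n + 1 + p.natDegree + 1) (p : K⟦X⟧) = p :=
    trunc_coe_eq_self (by omega)
  conv_rhs => rw [← h2]
  rw [coeff_pcomp hg (show n < n + 1 + p.natDegree + 1 by omega),
    eval₂_trunc_eq_sum_range, map_sum]
  exact Finset.sum_congr rfl fun k _ => (coeff_C_mul _ _ _).symm

lemma pcomp_mul {f₁ f₂ g : K⟦X⟧} (hg : constantCoeff g = 0) :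
    pcomp (f₁ * f₂) g = pcomp f₁ g * pcomp f₂ g := by
  ext n
  have ecoeff : ∀ (f : K⟦X⟧) (i : ℕ), i < n + 1 →
      coeff i (Polynomial.eval₂ C g (trunc (n + 1) f)) = coeff i (pcomp f g) := by
    intro f i hi
    rw [← pcomp_coe hg, coeff_pcomp hg (Nat.lt_succ_self i), coeff_pcomp hg (Nat.lt_succ_self i)]
    refine Finset.sum_congr rfl fun k hk => ?_
    rw [mem_range] at hk
    rw [Polynomial.coeff_coe, coeff_trunc, if_pos (by omega)]
  have e1 : coeff n (pcomp (f₁ * f₂) g) =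
      coeff n (pcomp ((trunc (n + 1) f₁ * trunc (n + 1) f₂ : Polynomial K) : K⟦X⟧) g) := by
    rw [coeff_pcomp hg (Nat.lt_succ_self n), coeff_pcomp hg (Nat.lt_succ_self n)]
    refine Finset.sum_congr rfl fun k hk => ?_
    rw [mem_range] at hk
    rw [coeff_mul_eq_coeff_trunc_mul_trunc f₁ f₂ (show k < n + 1 by omega), Polynomial.coe_mul]
  rw [e1, pcomp_coe hg, Polynomial.eval₂_mul, coeff_mul, coeff_mul]
  refine Finset.sum_congr rfl fun p hp => ?_
  rw [Finset.HasAntidiagonal.mem_antidiagonal] at hp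
  rw [ecoeff f₁ p.1 (by omega), ecoeff f₂ p.2 (by omega)]

lemma pcomp_add (f₁ f₂ g : K⟦X⟧) :
    pcomp (f₁ + f₂) g = pcomp f₁ g + pcomp f₂ g := by
  ext n
  simp [pcomp, coeff_mk, add_mul, Finset.sum_add_distrib]

lemma pcomp_one {g : K⟦X⟧} (hg : constantCoeff g = 0) : pcomp 1 g = 1 := by
  have h := pcomp_coe hg 1
  rw [Polynomial.coe_one, Polynomial.eval₂_one] at h
  exact h

lemma pcomp_X {g : K⟦X⟧} (hg : constantCoeff g = 0) : pcomp X g = g := by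
  have h := pcomp_coe hg Polynomial.X
  rw [Polynomial.coe_X, Polynomial.eval₂_X] at h
  exact h

lemma catalanGF_eq : catalanGF = 1 + X * catalanGF ^ 2 := by
  ext n
  cases n with
  | zero => simp [catalanGF]
  | succ n =>
    rw [map_add, coeff_succ_X_mul, sq, coeff_mul, catalanGF, coeff_mk, catalan_succ',
      Nat.cast_sum, coeff_one, if_neg (Nat.succ_ne_zero n), zero_add]
    exact Finset.sum_congr rfl fun p _ => by rw [coeff_mk, coeff_mk, Nat.cast_mul]

/-- If u(0)=0 and u(1+ru)/(1+(r+1)u) = x, then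
u(x) = (x/(1-(r+1)x))·c(-rx/(1-(r+1)x)²). -/
theorem reversion_is_signed_narayana (u : K⟦X⟧)
    (hu0 : constantCoeff u = 0)
    (heq : u * (1 + C r * u) * (1 + C (r + 1) * u)⁻¹ = X) :
    u = X * (1 - C (r + 1) * X)⁻¹ *
        pcomp catalanGF (-(C r) * X * ((1 - C (r + 1) * X) ^ 2)⁻¹) := by
  set A : K⟦X⟧ := 1 - C (r + 1) * X with hA
  set y : K⟦X⟧ := -(C r) * X * (A ^ 2)⁻¹ with hy
  set c : K⟦X⟧ := pcomp catalanGF y with hcdef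
  set w : K⟦X⟧ := X * A⁻¹ * c with hw
  have hA0 : constantCoeff A = 1 := by simp [hA]
  have hAinv : A * A⁻¹ = 1 := PowerSeries.mul_inv_cancel A (by rw [hA0]; exact one_ne_zero)
  have hA2inv : A ^ 2 * (A ^ 2)⁻¹ = 1 :=
    PowerSeries.mul_inv_cancel _ (by rw [map_pow, hA0, one_pow]; exact one_ne_zero)
  have hy0 : constantCoeff y = 0 := by
    simp [hy, map_mul]
  -- Catalan functional equation composed with y
  have hc : c = 1 + y * c ^ 2 := by
    rw [hcdef]
    conv_lhs => rw [catalanGF_eq]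
    rw [pcomp_add, pcomp_one hy0, sq, ← mul_assoc, pcomp_mul hy0, pcomp_mul hy0, pcomp_X hy0]
    ring
  -- u satisfies the quadratic equation
  have hden : constantCoeff (1 + C (r + 1) * u) ≠ 0 := by
    simp [map_add, map_mul, hu0]
  have h1 : u * (1 + C r * u) = X * (1 + C (r + 1) * u) := by
    have h2 := PowerSeries.inv_mul_cancel _ hden
    calc u * (1 + C r * u)
        = u * (1 + C r * u) * ((1 + C (r + 1) * u)⁻¹ * (1 + C (r + 1) * u)) := by
          rw [h2, mul_one]
      _ = (u * (1 + C r * u) * (1 + C (r + 1) * u)⁻¹) * (1 + C (r + 1) * u) := by ring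
      _ = X * (1 + C (r + 1) * u) := by rw [heq]
  have hqu : C r * u ^ 2 + A * u - X = 0 := by
    rw [hA]; linear_combination h1
  -- w satisfies the quadratic equation
  have hAw : A * w = X * c := by
    rw [hw]; linear_combination (X * c) * hAinv
  have hG' : C r * (X * c) ^ 2 + A ^ 2 * (X * c) - A ^ 2 * X = 0 := by
    linear_combination (A ^ 2 * X) * hc - (C r * X ^ 2 * c ^ 2) * hA2inv
  have hqw : C r * w ^ 2 + A * w - X = 0 := by
    have hA2 : (A : K⟦X⟧) ^ 2 ≠ 0 := by
      intro h
      have := congrArg constantCoeff h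
      rw [map_pow, hA0, one_pow, map_zero] at this
      exact one_ne_zero this
    have key : A ^ 2 * (C r * w ^ 2 + A * w - X) = 0 := by
      linear_combination hG' + (C r * (A * w + X * c) + A ^ 2) * hAw
    exact (mul_eq_zero.mp key).resolve_left hA2
  -- uniqueness of the solution with zero constant term
  have hw0 : constantCoeff w = 0 := by simp [hw, map_mul]
  have hfact : (u - w) * (C r * (u + w) + A) = 0 := by linear_combination hqu - hqw
  rcases mul_eq_zero.mp hfact with h | h
  · exact sub_eq_zero.mp h
  · exfalso
    have := congrArg constantCoeff h
    rw [map_add, map_mul, map_add, hu0, hw0, constantCoeff_C, add_zero, mul_zero, zero_add,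
      hA0, map_zero] at this
    exact one_ne_zero this

end
end

section
/- The formal power series e^t·(cosh(√(1+r)·t) - sinh(√(1+r)·t)/√(1+r)) has ordinary generating function (Borel-summed coefficients) (1-2x)/(1-2x-rx²); that is, if a_n(r) are defined by Σ a_n(r) x^n = (1-2x)/(1-2x-rx²), then Σ a_n(r) t^n/n! = e^t·(cosh(√(1+r) t) - sinh(√(1+r) t)/√(1+r)). -/
open PowerSeries Finset

noncomputable section

/-- cosh(√s·t) = Σ s^n t^{2n}/(2n)!, with s = 1+r; no square roots appear. -/
def coshSqrt (s : K) : K⟦X⟧ :=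
  PowerSeries.mk fun n => if Even n then s ^ (n / 2) / (Nat.factorial n : K) else 0

/-- sinh(√s·t)/√s = Σ s^n t^{2n+1}/(2n+1)!, with s = 1+r; no square roots appear. -/
def sinhSqrtDiv (s : K) : K⟦X⟧ :=
  PowerSeries.mk fun n => if Even n then 0 else s ^ (n / 2) / (Nat.factorial n : K)

lemma fact_ne (n : ℕ) : (Nat.factorial n : K) ≠ 0 :=
  Nat.cast_ne_zero.mpr (Nat.factorial_ne_zero n)

lemma E2.deriv_exp : d⁄dX K (exp K) = exp K := by
  ext n
  rw [coeff_derivative, coeff_exp, coeff_exp,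
    show ((n : K) + 1) = algebraMap ℚ K ((n : ℚ) + 1) by simp, ← map_mul]
  congr 1
  have h1 : ((n.factorial : ℚ)) ≠ 0 := Nat.cast_ne_zero.mpr (Nat.factorial_ne_zero n)
  have h2 : (((n : ℚ)) + 1) ≠ 0 := by positivity
  rw [Nat.factorial_succ]
  push_cast
  field_simp

lemma E2.deriv_cosh (s : K) : d⁄dX K (coshSqrt s) = C s * sinhSqrtDiv s := by
  ext n
  rw [coeff_derivative, coeff_C_mul]
  simp only [coshSqrt, sinhSqrtDiv, coeff_mk]
  rcases Nat.even_or_odd n with he | ho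
  · have : ¬ Even (n + 1) := by simp [Nat.even_add_one, he]
    simp [he, this]
  · obtain ⟨k, hk⟩ := ho
    subst hk
    have h1 : Even (2 * k + 1 + 1) := ⟨k + 1, by ring⟩
    have h2 : ¬ Even (2 * k + 1) := by simp [Nat.even_add_one]
    have h3 : (2 * k + 1 + 1) / 2 = k + 1 := by omega
    have h4 : (2 * k + 1) / 2 = k := by omega
    simp only [if_pos h1, if_neg h2, h3, h4]
    rw [Nat.factorial_succ]
    have h5 : ((2 * k + 1).factorial : K) ≠ 0 := fact_ne _
    have h6 : ((2 * k + 1 + 1 : ℕ) : K) ≠ 0 := Nat.cast_ne_zero.mpr (by omega)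
    push_cast at h6 ⊢
    field_simp
    ring

lemma E2.deriv_sinh (s : K) : d⁄dX K (sinhSqrtDiv s) = coshSqrt s := by
  ext n
  rw [coeff_derivative]
  simp only [coshSqrt, sinhSqrtDiv, coeff_mk]
  rcases Nat.even_or_odd n with he | ho
  · have h1 : ¬ Even (n + 1) := by simp [Nat.even_add_one, he]
    obtain ⟨k, hk⟩ := he
    subst hk
    have h3 : (k + k + 1) / 2 = k := by omega
    have h4 : (k + k) / 2 = k := by omega
    simp only [if_neg h1, if_pos (⟨k, rfl⟩ : Even (k + k)), h3, h4]
    rw [Nat.factorial_succ]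
    have h5 : ((k + k).factorial : K) ≠ 0 := fact_ne _
    have h6 : ((k + k + 1 : ℕ) : K) ≠ 0 := Nat.cast_ne_zero.mpr (by omega)
    push_cast at h6 ⊢
    rw [if_pos (show Even (k + k) from ⟨k, rfl⟩)]
    field_simp
    exact mul_div_cancel_right₀ _ (by convert h6 using 1; ring)
  · have h1 : Even (n + 1) := by simp [Nat.even_add_one, Nat.not_even_iff_odd.mpr ho]
    simp [Nat.not_even_iff_odd.mpr ho, h1]

lemma E2.F_eq : d⁄dX K (exp K * (coshSqrt (1 + r) - sinhSqrtDiv (1 + r))) =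
    C r * (exp K * sinhSqrtDiv (1 + r)) := by
  rw [Derivation.leibniz, smul_eq_mul, smul_eq_mul, map_sub, E2.deriv_cosh, E2.deriv_sinh,
    E2.deriv_exp]
  rw [show C (1 + r) = 1 + C r by simp [map_add, map_one]]
  ring

lemma E2.F_eq2 : d⁄dX K (C r * (exp K * sinhSqrtDiv (1 + r))) =
    C r * (exp K * (sinhSqrtDiv (1 + r) + coshSqrt (1 + r))) := by
  rw [Derivation.leibniz, Derivation.leibniz, smul_eq_mul, smul_eq_mul, smul_eq_mul, smul_eq_mul,
    E2.deriv_sinh, E2.deriv_exp, derivative_C]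
  ring

lemma E2.ode : d⁄dX K (d⁄dX K (exp K * (coshSqrt (1 + r) - sinhSqrtDiv (1 + r)))) =
    C 2 * d⁄dX K (exp K * (coshSqrt (1 + r) - sinhSqrtDiv (1 + r))) +
      C r * (exp K * (coshSqrt (1 + r) - sinhSqrtDiv (1 + r))) := by
  rw [E2.F_eq, E2.F_eq2, show (C 2 : K⟦X⟧) = 2 by simp [map_ofNat]]
  ring

lemma E2.eqA : (1 - 2 * X) * (1 - 2 * X - C r * X ^ 2)⁻¹ =
    1 - C 2 * X + C 2 * (X * ((1 - 2 * X) * (1 - 2 * X - C r * X ^ 2)⁻¹)) +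
      C r * (X * (X * ((1 - 2 * X) * (1 - 2 * X - C r * X ^ 2)⁻¹))) := by
  have hu : constantCoeff (1 - 2 * X - C r * X ^ 2) ≠ 0 := by
    simp [map_sub, map_mul, map_pow]
  have huA := PowerSeries.mul_inv_cancel _ hu
  have h2 : (C 2 : K⟦X⟧) = 2 := by simp [map_ofNat]
  rw [h2]
  linear_combination (1 - 2 * X) * huA

lemma E2.a0 : coeff 0 ((1 - 2 * X) * (1 - 2 * X - C r * X ^ 2)⁻¹) = 1 := by
  conv_lhs => rw [E2.eqA]
  simp

lemma E2.a1 : coeff 1 ((1 - 2 * X) * (1 - 2 * X - C r * X ^ 2)⁻¹) = 0 := by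
  conv_lhs => rw [E2.eqA]
  simp [coeff_C_mul, coeff_one, coeff_X, E2.a0]

lemma E2.arec (n : ℕ) : coeff (n + 2) ((1 - 2 * X) * (1 - 2 * X - C r * X ^ 2)⁻¹) =
    2 * coeff (n + 1) ((1 - 2 * X) * (1 - 2 * X - C r * X ^ 2)⁻¹) +
      r * coeff n ((1 - 2 * X) * (1 - 2 * X - C r * X ^ 2)⁻¹) := by
  conv_lhs => rw [E2.eqA]
  rw [show n + 2 = n + 1 + 1 by ring]
  simp [coeff_C_mul, coeff_one, coeff_X, coeff_succ_X_mul]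

lemma E2.b0 : coeff 0 (exp K * (coshSqrt (1 + r) - sinhSqrtDiv (1 + r))) = 1 := by
  rw [coeff_zero_eq_constantCoeff_apply, map_mul, map_sub]
  have hc : constantCoeff (coshSqrt (1 + r)) = 1 := by
    have : coeff 0 (coshSqrt (1 + r)) = 1 := by simp [coshSqrt, coeff_mk]
    rwa [coeff_zero_eq_constantCoeff_apply] at this
  have hs : constantCoeff (sinhSqrtDiv (1 + r)) = 0 := by
    have : coeff 0 (sinhSqrtDiv (1 + r)) = 0 := by simp [sinhSqrtDiv, coeff_mk]
    rwa [coeff_zero_eq_constantCoeff_apply] at this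
  rw [hc, hs, constantCoeff_exp]
  ring

lemma E2.b1 : coeff 1 (exp K * (coshSqrt (1 + r) - sinhSqrtDiv (1 + r))) = 0 := by
  have hS0 : coeff 0 (exp K * sinhSqrtDiv (1 + r)) = 0 := by
    rw [coeff_zero_eq_constantCoeff_apply, map_mul]
    have hs : constantCoeff (sinhSqrtDiv (1 + r)) = 0 := by
      rw [← coeff_zero_eq_constantCoeff_apply]; simp [sinhSqrtDiv, coeff_mk]
    rw [hs, mul_zero]
  have h := congrArg (coeff 0) E2.F_eq
  rw [coeff_derivative, coeff_C_mul, hS0, mul_zero] at h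
  simpa using h

lemma E2.brec (n : ℕ) :
    coeff (n + 2) (exp K * (coshSqrt (1 + r) - sinhSqrtDiv (1 + r))) *
        ((n : K) + 2) * ((n : K) + 1) =
      2 * (coeff (n + 1) (exp K * (coshSqrt (1 + r) - sinhSqrtDiv (1 + r))) * ((n : K) + 1)) +
        r * coeff n (exp K * (coshSqrt (1 + r) - sinhSqrtDiv (1 + r))) := by
  have h := congrArg (coeff n) E2.ode
  rw [coeff_derivative, coeff_derivative, map_add, coeff_C_mul, coeff_C_mul,
    coeff_derivative] at h
  push_cast at h
  rw [show n + 1 + 1 = n + 2 by ring] at h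
  linear_combination h

/-- If Σ a_n(r) x^n = (1-2x)/(1-2x-rx²), then
Σ a_n(r) t^n/n! = e^t·(cosh(√(1+r)·t) - sinh(√(1+r)·t)/√(1+r)). -/
theorem etude2_egf :
    (PowerSeries.mk fun n =>
        coeff n ((1 - 2 * X) * (1 - 2 * X - C r * X ^ 2)⁻¹) / (Nat.factorial n : K)) =
      exp K * (coshSqrt (1 + r) - sinhSqrtDiv (1 + r)) := by
  have key : ∀ n : ℕ,
      coeff n ((1 - 2 * X) * (1 - 2 * X - C r * X ^ 2)⁻¹) / (Nat.factorial n : K) =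
        coeff n (exp K * (coshSqrt (1 + r) - sinhSqrtDiv (1 + r))) ∧
      coeff (n + 1) ((1 - 2 * X) * (1 - 2 * X - C r * X ^ 2)⁻¹) / (Nat.factorial (n + 1) : K) =
        coeff (n + 1) (exp K * (coshSqrt (1 + r) - sinhSqrtDiv (1 + r))) := by
    intro n
    induction n with
    | zero => simp [E2.a0, E2.a1, E2.b0, E2.b1]
    | succ n ih =>
      obtain ⟨h1, h2⟩ := ih
      refine ⟨h2, ?_⟩
      have hb := E2.brec n
      rw [← h1, ← h2] at hb
      rw [show n + 1 + 1 = n + 2 by ring, E2.arec n]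
      have e1 : ((n : K) + 1) ≠ 0 := by
        have := (Nat.cast_ne_zero (R := K)).mpr (Nat.succ_ne_zero n); push_cast at this
        exact this
      have e2 : ((n : K) + 2) ≠ 0 := by
        have := (Nat.cast_ne_zero (R := K)).mpr (show n + 2 ≠ 0 by omega); push_cast at this
        exact this
      have f0 := fact_ne n
      have hf1 : ((n + 1).factorial : K) = ((n : K) + 1) * (n.factorial : K) := by
        rw [Nat.factorial_succ]; push_cast; ring
      have hf2 : ((n + 2).factorial : K) =
          ((n : K) + 2) * (((n : K) + 1) * (n.factorial : K)) := by
        rw [show n + 2 = (n + 1) + 1 by ring, Nat.factorial_succ, Nat.factorial_succ]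
        push_cast; ring
      rw [hf1] at hb
      rw [hf2]
      field_simp at hb ⊢
      refine mul_left_cancel₀ (mul_ne_zero e1 f0) ?_
      linear_combination -((n : K) + 1) * (n.factorial : K) * hb
  ext n
  rw [coeff_mk]
  exact (key n).1

end
end

section
/- The coefficients a_n(r) of the expansion of (1-2x)/(1-2x-rx²) in ℚ[r][[x]] are given by a_n(r) = Σ_{k=0}^{⌊n/2⌋} C(n-k-1, n-2k)·2^{n-2k}·r^k. -/
open PowerSeries Finset

noncomputable section

private def cc (n k : ℕ) : K :=
  (Nat.choose (n - k - 1) (n - 2 * k) : K) * 2 ^ (n - 2 * k) * r ^ k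

private def S (n : ℕ) : K := ∑ k ∈ range (n / 2 + 1), cc n k

private lemma cc_zero (n : ℕ) (h : 1 ≤ n) : cc n 0 = 0 := by
  unfold cc
  rw [Nat.choose_eq_zero_of_lt (by omega)]
  simp

private lemma step (n k : ℕ) (h : 2 * k + 1 ≤ n) :
    cc (n + 2) (k + 1) = 2 * cc (n + 1) (k + 1) + r * cc n k := by
  obtain ⟨t, rfl⟩ : ∃ t, n = 2 * k + 1 + t := ⟨n - (2 * k + 1), by omega⟩
  unfold cc
  have h1 : 2 * k + 1 + t + 2 - (k + 1) - 1 = (k + t) + 1 := by omega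
  have h2 : 2 * k + 1 + t + 2 - 2 * (k + 1) = t + 1 := by omega
  have h3 : 2 * k + 1 + t + 1 - (k + 1) - 1 = k + t := by omega
  have h4 : 2 * k + 1 + t + 1 - 2 * (k + 1) = t := by omega
  have h5 : 2 * k + 1 + t - 0 - 1 = 2 * k + t := by omega
  have h6 : 2 * k + 1 + t - k - 1 = k + t := by omega
  have h7 : 2 * k + 1 + t - 2 * k = t + 1 := by omega
  rw [h1, h2, h3, h4, h6, h7, Nat.choose_succ_succ]
  push_cast
  ring

private lemma S_rec (n : ℕ) : S (n + 2) = 2 * S (n + 1) + r * S n := by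
  unfold S
  rcases Nat.even_or_odd n with ⟨m, hm⟩ | ⟨m, hm⟩
  · subst hm
    have e2 : (m + m + 2) / 2 + 1 = m + 2 := by omega
    have e1 : (m + m + 1) / 2 + 1 = m + 1 := by omega
    have e0 : (m + m) / 2 + 1 = m + 1 := by omega
    rw [e2, e1, e0, sum_range_succ' (fun k => cc (m + m + 2) k),
      sum_range_succ' (fun k => cc (m + m + 1) k),
      sum_range_succ (fun k => cc (m + m + 2) (k + 1)),
      sum_range_succ (fun k => cc (m + m) k),
      cc_zero _ (by omega), cc_zero _ (by omega)]
    have hb : cc (m + m + 2) (m + 1) = r * cc (m + m) m := by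
      unfold cc
      have b1 : m + m + 2 - (m + 1) - 1 = m := by omega
      have b2 : m + m + 2 - 2 * (m + 1) = 0 := by omega
      have b3 : m + m - 2 * m = 0 := by omega
      rw [b1, b2, b3, Nat.choose_zero_right, Nat.choose_zero_right]
      push_cast
      ring
    have hs : ∑ k ∈ range m, cc (m + m + 2) (k + 1) =
        ∑ k ∈ range m, (2 * cc (m + m + 1) (k + 1) + r * cc (m + m) k) :=
      sum_congr rfl fun k hk => step _ _ (by simp at hk; omega)
    rw [hs, hb, Finset.sum_add_distrib, ← Finset.mul_sum, ← Finset.mul_sum]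
    ring
  · subst hm
    have e2 : (2 * m + 1 + 2) / 2 + 1 = m + 2 := by omega
    have e1 : (2 * m + 1 + 1) / 2 + 1 = m + 2 := by omega
    have e0 : (2 * m + 1) / 2 + 1 = m + 1 := by omega
    rw [e2, e1, e0, sum_range_succ' (fun k => cc (2 * m + 1 + 2) k),
      sum_range_succ' (fun k => cc (2 * m + 1 + 1) k),
      cc_zero _ (by omega), cc_zero _ (by omega)]
    have hs : ∑ k ∈ range (m + 1), cc (2 * m + 1 + 2) (k + 1) =
        ∑ k ∈ range (m + 1), (2 * cc (2 * m + 1 + 1) (k + 1) + r * cc (2 * m + 1) k) :=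
      sum_congr rfl fun k hk => step _ _ (by simp at hk; omega)
    rw [hs, Finset.sum_add_distrib, ← Finset.mul_sum, ← Finset.mul_sum]
    ring

private lemma main_eq :
    (1 - 2 * X - C (R := K) r * X ^ 2) * PowerSeries.mk S = 1 - 2 * X := by
  have two : (2 : K⟦X⟧) = C (R := K) 2 := (map_ofNat (C (R := K)) 2).symm
  have expand : (1 - 2 * X - C (R := K) r * X ^ 2) * PowerSeries.mk S =
      PowerSeries.mk S - C (R := K) 2 * (X * PowerSeries.mk S)
        - C (R := K) r * (X * (X * PowerSeries.mk S)) := by rw [← two]; ring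
  rw [expand, two]
  ext n
  match n with
  | 0 =>
    simp [S, cc, PowerSeries.coeff_zero_eq_constantCoeff]
  | 1 =>
    have hz : coeff (R := K) 0 (X * PowerSeries.mk S) = 0 := by
      simp [PowerSeries.coeff_zero_eq_constantCoeff]
    simp only [map_sub, PowerSeries.coeff_C_mul, coeff_succ_X_mul, coeff_mk, hz,
      PowerSeries.coeff_one, coeff_X, mul_zero]
    norm_num [S, cc]
  | (k + 2) =>
    have h2 : S (k + 2) = 2 * S (k + 1) + r * S k := S_rec k
    simp only [map_sub, PowerSeries.coeff_C_mul, coeff_succ_X_mul, coeff_mk,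
      PowerSeries.coeff_one, coeff_X]
    rw [if_neg (by omega : ¬(k + 2 = 0)), if_neg (by omega : ¬(k + 2 = 1))]
    linear_combination h2

/-- a_n(r) = Σ_{k=0}^{⌊n/2⌋} C(n-k-1, n-2k)·2^{n-2k}·r^k, where a_n(r) are the
coefficients of (1-2x)/(1-2x-rx²). (Nat subtraction realizes the convention
C(-1,0) = 1 for the n = 0 term.) -/
theorem etude2_coefficients (n : ℕ) :
    coeff (R := K) n ((1 - 2 * X) * (1 - 2 * X - C (R := K) r * X ^ 2)⁻¹) =
      ∑ k ∈ range (n / 2 + 1),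
        (Nat.choose (n - k - 1) (n - 2 * k) : K) * 2 ^ (n - 2 * k) * r ^ k := by
  have hu : constantCoeff (R := K) (1 - 2 * X - C (R := K) r * X ^ 2) ≠ 0 := by
    simp
  have hc : (1 - 2 * X - C (R := K) r * X ^ 2) * (1 - 2 * X - C (R := K) r * X ^ 2)⁻¹ = 1 :=
    PowerSeries.mul_inv_cancel _ hu
  have key : (1 - 2 * X) * (1 - 2 * X - C (R := K) r * X ^ 2)⁻¹ = PowerSeries.mk S := by
    calc (1 - 2 * X) * (1 - 2 * X - C (R := K) r * X ^ 2)⁻¹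
        = ((1 - 2 * X - C (R := K) r * X ^ 2) * PowerSeries.mk S) *
            (1 - 2 * X - C (R := K) r * X ^ 2)⁻¹ := by rw [main_eq]
      _ = PowerSeries.mk S * ((1 - 2 * X - C (R := K) r * X ^ 2) *
            (1 - 2 * X - C (R := K) r * X ^ 2)⁻¹) := by ring
      _ = PowerSeries.mk S := by rw [hc, mul_one]
  rw [key, coeff_mk]
  rfl

end
end
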